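/- arXiv:math/0703836 — 3 statements merged into one kernel-verified Lean document; each statement's English description precedes it below -/
import Mathlib

section
/- Let C be an LD-set for Q and ν, ν' two probability measures on (X,𝒳). For any integer n and nonnegative measurable functions g_0,…,g_n on X such that E^Q_ν[∏_{i=0}^n g_i(X_i)] < ∞ and E^Q_{ν'}[∏_{i=0}^n g_i(X_i)] < ∞, define Δ_n(ν,ν',{g_i}) := sup_{A∈𝒳} | E^{Q̄}_{ν⊗ν'}[∏_{i=0}^n ḡ_i(X_i,X'_i) 1_A(X_n)] − E^{Q̄}_{ν'⊗ν}[∏_{i=0}^n ḡ_i(X_i,X'_i) 1_A(X_n)] |, where ḡ_i(x,x') := g_i(x) g_i(x'). Then Δ_n(ν,ν',{g_i}) ≤ E^{Q̄}_{ν⊗ν'}[ ∏_{i=0}^n ḡ_i(X_i,X'_i) · ρ_C^{N_{C,n}} ], where N_{C,n} := Σ_{i=0}^{n−1} 1_{C×C}(X_i,X'_i) 1_{C×C}(X_{i+1},X'_{i+1}) and ρ_C := 1 − (ε⁻_C/ε⁺_C)². -/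
open MeasureTheory ProbabilityTheory
open scoped ENNReal

/-- A set `C` is a local Doeblin (LD) set for the kernel `Q`, with minorizing/majorizing
measure `lam` and constants `em, ep`. -/
def IsLDSet {X : Type*} [MeasurableSpace X] (Q : Kernel X X) (C : Set X)
    (lam : Measure X) (em ep : ℝ) : Prop :=
  MeasurableSet C ∧ 0 < lam C ∧ 0 < em ∧ 0 < ep ∧
    ∀ x ∈ C, ∀ A : Set X, MeasurableSet A →
      ENNReal.ofReal em * lam (A ∩ C) ≤ Q x (A ∩ C) ∧
        Q x (A ∩ C) ≤ ENNReal.ofReal ep * lam (A ∩ C)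

/-- The law of the Markov chain with kernel `Q` and initial distribution `ν`, realized as a
measure on `ℕ → X`: `pathMeasure Q ν n` carries the joint law of the first `n+1`
coordinates (coordinates beyond `n` are frozen copies). -/
noncomputable def pathMeasure {X : Type*} [MeasurableSpace X] (Q : Kernel X X)
    (ν : Measure X) : ℕ → Measure (ℕ → X)
  | 0 => ν.map (fun x _ => x)
  | n + 1 => (pathMeasure Q ν n).bind
      (fun ω => (Q (ω n)).map (fun x' => Function.update ω (n + 1) x'))

/-- The product kernel `Q̄` on `X × X`, `Q̄[(x,x'), A×A'] = Q(x,A) Q(x',A')`. -/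
noncomputable def prodKernel {X : Type*} [MeasurableSpace X] (Q : Kernel X X) :
    Kernel (X × X) (X × X) :=
  (Q.comap Prod.fst measurable_fst).prod (Q.comap Prod.snd measurable_snd)

/-- The number of consecutive joint visits to `C × C` before time `n` along a path `ω`. -/
noncomputable def jointVisits {X : Type*} (C : Set X) (n : ℕ) (ω : ℕ → X × X) : ℕ :=
  ∑ i ∈ Finset.range n,
    (C ×ˢ C).indicator (fun _ => 1) (ω i) * (C ×ˢ C).indicator (fun _ => 1) (ω (i + 1))


section Aux
open Function Set
variable {Y : Type*} [MeasurableSpace Y]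

lemma hmm_measurable_update_joint (n : ℕ) :
    Measurable (fun q : (ℕ → Y) × Y => Function.update q.1 n q.2) := by
  apply measurable_pi_lambda
  intro k
  by_cases hk : k = n
  · subst hk
    simp only [Function.update_self]
    exact measurable_snd
  · simp only [Function.update_of_ne hk]
    exact (measurable_pi_apply k).comp measurable_fst

lemma hmm_measurable_step (Q : Kernel Y Y) [IsSFiniteKernel Q] (n : ℕ) :
    Measurable (fun ω : ℕ → Y => (Q (ω n)).map (fun y => Function.update ω (n + 1) y)) := by
  apply Measure.measurable_of_measurable_coe
  intro s hs
  have h1 : ∀ ω : ℕ → Y, (Q (ω n)).map (fun y => Function.update ω (n + 1) y) s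
      = (Q.comap (fun ω : ℕ → Y => ω n) (measurable_pi_apply n)) ω
        (Prod.mk ω ⁻¹' ((fun q : (ℕ → Y) × Y => Function.update q.1 (n + 1) q.2) ⁻¹' s)) := by
    intro ω
    rw [Measure.map_apply (measurable_update _) hs, Kernel.comap_apply]
    rfl
  simp_rw [h1]
  exact Kernel.measurable_kernel_prodMk_left ((hmm_measurable_update_joint (n + 1)) hs)

lemma lintegral_pathMeasure_zero (Q : Kernel Y Y) (ν : Measure Y) {F : (ℕ → Y) → ℝ≥0∞}
    (hF : Measurable F) :
    ∫⁻ ω, F ω ∂(pathMeasure Q ν 0) = ∫⁻ x, F (fun _ => x) ∂ν := by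
  show ∫⁻ ω, F ω ∂(ν.map (fun x _ => x)) = _
  rw [lintegral_map hF (measurable_pi_lambda (fun (x : Y) (_ : ℕ) => x) fun _ => measurable_id)]

lemma lintegral_pathMeasure_succ (Q : Kernel Y Y) [IsSFiniteKernel Q] (ν : Measure Y) (n : ℕ)
    {F : (ℕ → Y) → ℝ≥0∞} (hF : Measurable F) :
    ∫⁻ ω, F ω ∂(pathMeasure Q ν (n + 1))
      = ∫⁻ ω, ∫⁻ y, F (Function.update ω (n + 1) y) ∂(Q (ω n)) ∂(pathMeasure Q ν n) := by
  show ∫⁻ ω, F ω ∂((pathMeasure Q ν n).bind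
      (fun ω => (Q (ω n)).map (fun x' => Function.update ω (n + 1) x'))) = _
  rw [Measure.lintegral_bind (hmm_measurable_step Q n).aemeasurable hF.aemeasurable]
  refine lintegral_congr fun ω => ?_
  rw [lintegral_map hF (measurable_update _)]

end Aux

section Aux2
open Function Set
variable {X : Type*} [MeasurableSpace X]

instance prodKernel_isMarkov (Q : Kernel X X) [IsMarkovKernel Q] :
    IsMarkovKernel (prodKernel Q) := by
  unfold prodKernel; infer_instance

lemma prodKernel_apply (Q : Kernel X X) [IsMarkovKernel Q] (z : X × X) :
    prodKernel Q z = (Q z.1).prod (Q z.2) := by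
  rw [prodKernel, Kernel.prod_apply, Kernel.comap_apply, Kernel.comap_apply]

lemma prodKernel_swap (Q : Kernel X X) [IsMarkovKernel Q] (z : X × X) :
    prodKernel Q z.swap = (prodKernel Q z).map Prod.swap := by
  rw [prodKernel_apply, prodKernel_apply, Measure.prod_swap]
  rfl

noncomputable def gbar {X : Type*} (g : ℕ → X → ℝ≥0∞) (i : ℕ) (z : X × X) : ℝ≥0∞ :=
  g i z.1 * g i z.2

lemma measurable_gbar {g : ℕ → X → ℝ≥0∞} (hg : ∀ i, Measurable (g i)) (i : ℕ) :
    Measurable (gbar g i) :=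
  ((hg i).comp measurable_fst).mul ((hg i).comp measurable_snd)

omit [MeasurableSpace X] in
lemma gbar_swap (g : ℕ → X → ℝ≥0∞) (i : ℕ) (z : X × X) : gbar g i z.swap = gbar g i z :=
  mul_comm _ _

lemma measurable_prod_gbar {g : ℕ → X → ℝ≥0∞} (hg : ∀ i, Measurable (g i)) (n : ℕ) :
    Measurable fun ω : ℕ → X × X => ∏ i ∈ Finset.range n, gbar g i (ω i) :=
  Finset.measurable_prod _ fun i _ => (measurable_gbar hg i).comp (measurable_pi_apply i)

lemma measurable_indN {C : Set X} (hCm : MeasurableSet C) :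
    Measurable ((C ×ˢ C).indicator (fun _ => (1 : ℕ))) :=
  measurable_const.indicator (hCm.prod hCm)

lemma measurable_jointVisits {C : Set X} (hCm : MeasurableSet C) (n : ℕ) :
    Measurable fun ω : ℕ → X × X => jointVisits C n ω := by
  unfold jointVisits
  apply Finset.measurable_sum
  intro i _
  exact ((measurable_indN hCm).comp (measurable_pi_apply i)).mul
    ((measurable_indN hCm).comp (measurable_pi_apply (i + 1)))

lemma measurable_rhopow {C : Set X} (hCm : MeasurableSet C) (ρ : ℝ≥0∞) (n : ℕ) :
    Measurable fun ω : ℕ → X × X => ρ ^ jointVisits C n ω :=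
  measurable_from_nat.comp (measurable_jointVisits hCm n)

/-- Core contraction lemma on abstract finite measures. -/
lemma hmm_core {m m' : Measure (X × X)} [IsFiniteMeasure m] [IsFiniteMeasure m'] {ρ : ℝ≥0∞}
    (h1 : m' ≤ m) (h2 : m'.map Prod.swap = m') (h3 : m ≤ ρ • m + m')
    {p G : X × X → ℝ≥0∞} (hp : Measurable p) (hG : Measurable G)
    (hpG : ∀ z, p z ≤ p z.swap + G z) :
    ∫⁻ z, p z ∂m ≤ (∫⁻ z, p z.swap ∂m) + ρ * ∫⁻ z, G z ∂m := by
  by_cases htop : ρ * ∫⁻ z, G z ∂m = ⊤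
  · rw [htop]
    exact le_top.trans_eq (add_top _).symm
  by_cases hρ : ρ = 0
  · have hmm' : m = m' := by
      refine le_antisymm ?_ h1
      simpa [hρ] using h3
    have : ∫⁻ z, p z ∂m = ∫⁻ z, p z.swap ∂m := by
      conv_lhs => rw [hmm', ← h2]
      rw [lintegral_map hp measurable_swap, ← hmm']
    rw [this]
    exact le_self_add
  have hGfin : ∫⁻ z, G z ∂m ≠ ⊤ := fun h => htop (by rw [h, ENNReal.mul_top hρ])
  have hGm' : ∫⁻ z, G z ∂m' ≤ ∫⁻ z, G z ∂m := lintegral_mono' h1 le_rfl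
  have hsub : (m - m') + m' = m := Measure.sub_add_cancel_of_le h1
  have e1 : ∫⁻ z, p z ∂m = ∫⁻ z, p z ∂(m - m') + ∫⁻ z, p z ∂m' := by
    rw [← lintegral_add_measure, hsub]
  have e2 : ∫⁻ z, p z ∂m' = ∫⁻ z, p z.swap ∂m' := by
    conv_lhs => rw [← h2]
    rw [lintegral_map hp measurable_swap]
  have hpsw : Measurable fun z : X × X => p z.swap := hp.comp measurable_swap
  have e3 : ∫⁻ z, p z ∂(m - m')
      ≤ ∫⁻ z, p z.swap ∂(m - m') + ∫⁻ z, G z ∂(m - m') := by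
    rw [← lintegral_add_left hpsw]
    exact lintegral_mono hpG
  have e4 : ∫⁻ z, G z ∂(m - m') ≤ ρ * ∫⁻ z, G z ∂m := by
    have hGc : ∫⁻ z, G z ∂m' ≠ ⊤ := ne_top_of_le_ne_top hGfin hGm'
    have h5 : ∫⁻ z, G z ∂m ≤ ρ * ∫⁻ z, G z ∂m + ∫⁻ z, G z ∂m' := by
      calc ∫⁻ z, G z ∂m ≤ ∫⁻ z, G z ∂(ρ • m + m') := lintegral_mono' h3 le_rfl
        _ = ρ * ∫⁻ z, G z ∂m + ∫⁻ z, G z ∂m' := by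
            rw [lintegral_add_measure, lintegral_smul_measure, smul_eq_mul]
    have h6 : ∫⁻ z, G z ∂(m - m') + ∫⁻ z, G z ∂m' = ∫⁻ z, G z ∂m := by
      rw [← lintegral_add_measure, hsub]
    exact (ENNReal.add_le_add_iff_right hGc).mp (by rw [h6]; exact h5)
  calc ∫⁻ z, p z ∂m = ∫⁻ z, p z ∂(m - m') + ∫⁻ z, p z.swap ∂m' := by rw [e1, e2]
    _ ≤ (∫⁻ z, p z.swap ∂(m - m') + ∫⁻ z, G z ∂(m - m')) + ∫⁻ z, p z.swap ∂m' :=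
        add_le_add_left e3 _
    _ = (∫⁻ z, p z.swap ∂(m - m') + ∫⁻ z, p z.swap ∂m') + ∫⁻ z, G z ∂(m - m') := by ring
    _ = ∫⁻ z, p z.swap ∂m + ∫⁻ z, G z ∂(m - m') := by rw [← lintegral_add_measure, hsub]
    _ ≤ ∫⁻ z, p z.swap ∂m + ρ * ∫⁻ z, G z ∂m := add_le_add_right e4 _

end Aux2

section Aux3
open Function Set
variable {X : Type*} [MeasurableSpace X] {Q : Kernel X X} [IsMarkovKernel Q]
  {C : Set X} {lam : Measure X} {em ep : ℝ}

lemma hmm_lamC_lt_top (hC : IsLDSet Q C lam em ep) : lam C < ⊤ := by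
  obtain ⟨hCm, hlam0, hem, hep, hld⟩ := hC
  obtain ⟨x0, hx0⟩ : C.Nonempty := by
    rw [Set.nonempty_iff_ne_empty]
    rintro rfl
    simp at hlam0
  have h := (hld x0 hx0 Set.univ MeasurableSet.univ).1
  rw [Set.univ_inter] at h
  by_contra htop
  rw [not_lt, top_le_iff] at htop
  rw [htop, ENNReal.mul_top (by simpa using ENNReal.ofReal_pos.mpr hem |>.ne')] at h
  exact (prob_le_one.trans_lt (by simp : (1:ℝ≥0∞) < ⊤)).ne (top_le_iff.mp h)

lemma hmm_em_le_ep (hC : IsLDSet Q C lam em ep) : em ≤ ep := by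
  have hfin := hmm_lamC_lt_top hC
  obtain ⟨hCm, hlam0, hem, hep, hld⟩ := hC
  obtain ⟨x0, hx0⟩ : C.Nonempty := by
    rw [Set.nonempty_iff_ne_empty]
    rintro rfl
    simp at hlam0
  have h := hld x0 hx0 Set.univ MeasurableSet.univ
  rw [Set.univ_inter] at h
  have hmul : ENNReal.ofReal em * lam C ≤ ENNReal.ofReal ep * lam C := h.1.trans h.2
  rw [ENNReal.mul_le_mul_iff_left hlam0.ne' hfin.ne] at hmul
  exact (ENNReal.ofReal_le_ofReal_iff hep.le).mp hmul

lemma hmm_restrict_low (hC : IsLDSet Q C lam em ep) {x : X} (hx : x ∈ C) :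
    (ENNReal.ofReal em) • lam.restrict C ≤ (Q x).restrict C := by
  refine Measure.le_iff.mpr fun s hs => ?_
  rw [Measure.restrict_apply hs, Measure.smul_apply, Measure.restrict_apply hs, smul_eq_mul]
  exact (hC.2.2.2.2 x hx s hs).1

lemma hmm_restrict_up (hC : IsLDSet Q C lam em ep) {x : X} (hx : x ∈ C) :
    (Q x).restrict C ≤ (ENNReal.ofReal ep) • lam.restrict C := by
  refine Measure.le_iff.mpr fun s hs => ?_
  rw [Measure.restrict_apply hs, Measure.smul_apply, Measure.restrict_apply hs, smul_eq_mul]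
  exact (hC.2.2.2.2 x hx s hs).2

end Aux3

section Aux4
open Function Set
variable {X : Type*} [MeasurableSpace X] {Q : Kernel X X} [IsMarkovKernel Q]
  {C : Set X} {lam : Measure X} {em ep : ℝ}

lemma hmm_step (hC : IsLDSet Q C lam em ep) {p G : X × X → ℝ≥0∞}
    (hp : Measurable p) (hG : Measurable G) (hpG : ∀ w, p w ≤ p w.swap + G w) (z : X × X) :
    ∫⁻ y, p y ∂(prodKernel Q z)
      ≤ (∫⁻ y, p y.swap ∂(prodKernel Q z))
        + ∫⁻ y, (ENNReal.ofReal (1 - (em / ep) ^ 2))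
            ^ ((C ×ˢ C).indicator (fun _ => (1 : ℕ)) z
              * (C ×ˢ C).indicator (fun _ => (1 : ℕ)) y) * G y ∂(prodKernel Q z) := by
  have hpsw : Measurable fun w : X × X => p w.swap := hp.comp measurable_swap
  set ρ : ℝ≥0∞ := ENNReal.ofReal (1 - (em / ep) ^ 2) with hρ
  have hCC : MeasurableSet (C ×ˢ C) := hC.1.prod hC.1
  by_cases hz : z ∈ C ×ˢ C
  swap
  · simp only [Set.indicator_of_notMem hz, zero_mul, pow_zero, one_mul]
    calc ∫⁻ y, p y ∂(prodKernel Q z) ≤ ∫⁻ y, p y.swap + G y ∂(prodKernel Q z) :=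
          lintegral_mono hpG
      _ = _ := lintegral_add_left hpsw _
  · simp only [Set.indicator_of_mem hz, one_mul]
    obtain ⟨hz1, hz2⟩ := hz
    have hem : 0 < em := hC.2.2.1
    have hep : 0 < ep := hC.2.2.2.1
    have hle : em ≤ ep := hmm_em_le_ep hC
    haveI hfinlamC : IsFiniteMeasure (lam.restrict C) :=
      ⟨by rw [Measure.restrict_apply_univ]; exact hmm_lamC_lt_top hC⟩
    set L : Measure (X × X) := (lam.restrict C).prod (lam.restrict C) with hL
    set m : Measure (X × X) := ((Q z.1).restrict C).prod ((Q z.2).restrict C) with hm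
    set m' : Measure (X × X) := (ENNReal.ofReal em * ENNReal.ofReal em) • L with hm'
    have hmQ : m = (prodKernel Q z).restrict (C ×ˢ C) := by
      rw [hm, prodKernel_apply, Measure.prod_restrict]
    haveI : IsFiniteMeasure m := by rw [hmQ]; infer_instance
    haveI : IsFiniteMeasure m' := by
      refine ⟨?_⟩
      rw [hm', Measure.smul_apply, smul_eq_mul]
      exact ENNReal.mul_lt_top (ENNReal.mul_lt_top ENNReal.ofReal_lt_top ENNReal.ofReal_lt_top)
        (measure_lt_top _ _)
    -- pointwise bounds
    have hml : ∀ s : Set (X × X), MeasurableSet s →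
        (ENNReal.ofReal em * ENNReal.ofReal em) * L s ≤ m s := by
      intro s hs
      rw [hm, hL, Measure.prod_apply hs, Measure.prod_apply hs]
      calc ENNReal.ofReal em * ENNReal.ofReal em
            * ∫⁻ x, (lam.restrict C) (Prod.mk x ⁻¹' s) ∂(lam.restrict C)
          = ENNReal.ofReal em * ∫⁻ x, (lam.restrict C) (Prod.mk x ⁻¹' s)
              ∂((ENNReal.ofReal em) • lam.restrict C) := by
            rw [lintegral_smul_measure, smul_eq_mul, mul_assoc]
        _ ≤ ENNReal.ofReal em * ∫⁻ x, (lam.restrict C) (Prod.mk x ⁻¹' s)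
              ∂((Q z.1).restrict C) :=
            mul_le_mul_right (lintegral_mono' (hmm_restrict_low hC hz1) le_rfl) _
        _ = ∫⁻ x, ENNReal.ofReal em * (lam.restrict C) (Prod.mk x ⁻¹' s)
              ∂((Q z.1).restrict C) :=
            (lintegral_const_mul _ (measurable_measure_prodMk_left hs)).symm
        _ ≤ ∫⁻ x, ((Q z.2).restrict C) (Prod.mk x ⁻¹' s) ∂((Q z.1).restrict C) := by
            refine lintegral_mono fun x => ?_
            have := (hmm_restrict_low hC hz2) (Prod.mk x ⁻¹' s)
            rwa [Measure.smul_apply, smul_eq_mul] at this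
    have hmu : ∀ s : Set (X × X), MeasurableSet s →
        m s ≤ (ENNReal.ofReal ep * ENNReal.ofReal ep) * L s := by
      intro s hs
      rw [hm, hL, Measure.prod_apply hs, Measure.prod_apply hs]
      calc ∫⁻ x, ((Q z.2).restrict C) (Prod.mk x ⁻¹' s) ∂((Q z.1).restrict C)
          ≤ ∫⁻ x, ENNReal.ofReal ep * (lam.restrict C) (Prod.mk x ⁻¹' s)
              ∂((Q z.1).restrict C) := by
            refine lintegral_mono fun x => ?_
            have := (hmm_restrict_up hC hz2) (Prod.mk x ⁻¹' s)
            rwa [Measure.smul_apply, smul_eq_mul] at this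
        _ = ENNReal.ofReal ep * ∫⁻ x, (lam.restrict C) (Prod.mk x ⁻¹' s)
              ∂((Q z.1).restrict C) :=
            lintegral_const_mul _ (measurable_measure_prodMk_left hs)
        _ ≤ ENNReal.ofReal ep * ∫⁻ x, (lam.restrict C) (Prod.mk x ⁻¹' s)
              ∂((ENNReal.ofReal ep) • lam.restrict C) :=
            mul_le_mul_right (lintegral_mono' (hmm_restrict_up hC hz1) le_rfl) _
        _ = ENNReal.ofReal ep * ENNReal.ofReal ep
              * ∫⁻ x, (lam.restrict C) (Prod.mk x ⁻¹' s) ∂(lam.restrict C) := by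
            rw [lintegral_smul_measure, smul_eq_mul, mul_assoc]
    have h1 : m' ≤ m := Measure.le_iff.mpr fun s hs => by
      rw [hm', Measure.smul_apply, smul_eq_mul]
      exact hml s hs
    have h2 : m'.map Prod.swap = m' := by
      rw [hm', Measure.map_smul, hL, Measure.prod_swap]
    have hsq : (em / ep) ^ 2 ≤ 1 := by
      refine pow_le_one₀ (div_nonneg hem.le hep.le) ?_
      rw [div_le_one hep]
      exact hle
    have hsum1 : ρ + ENNReal.ofReal ((em / ep) ^ 2) = 1 := by
      rw [hρ, ← ENNReal.ofReal_add (by linarith) (by positivity), sub_add_cancel,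
        ENNReal.ofReal_one]
    have harith : ENNReal.ofReal ((em / ep) ^ 2) * (ENNReal.ofReal ep * ENNReal.ofReal ep)
        = ENNReal.ofReal em * ENNReal.ofReal em := by
      rw [← ENNReal.ofReal_mul (by positivity), ← ENNReal.ofReal_mul (by positivity),
        ← ENNReal.ofReal_mul (by positivity)]
      congr 1
      field_simp
    have h3 : m ≤ ρ • m + m' := by
      refine Measure.le_iff.mpr fun s hs => ?_
      rw [Measure.add_apply, Measure.smul_apply, smul_eq_mul, hm', Measure.smul_apply,
        smul_eq_mul]
      have ht : ENNReal.ofReal ((em / ep) ^ 2) * m s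
          ≤ ENNReal.ofReal em * ENNReal.ofReal em * L s := by
        calc ENNReal.ofReal ((em / ep) ^ 2) * m s
            ≤ ENNReal.ofReal ((em / ep) ^ 2)
              * ((ENNReal.ofReal ep * ENNReal.ofReal ep) * L s) :=
              mul_le_mul_right (hmu s hs) _
          _ = ENNReal.ofReal em * ENNReal.ofReal em * L s := by rw [← mul_assoc, harith]
      calc m s = (ρ + ENNReal.ofReal ((em / ep) ^ 2)) * m s := by rw [hsum1, one_mul]
        _ = ρ * m s + ENNReal.ofReal ((em / ep) ^ 2) * m s := add_mul _ _ _
        _ ≤ ρ * m s + ENNReal.ofReal em * ENNReal.ofReal em * L s := add_le_add_right ht _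
    have core := hmm_core h1 h2 h3 hp hG hpG
    rw [hmQ] at core
    -- split integrals over CC and its complement
    have hCCside : ∫⁻ y in C ×ˢ C, ρ ^ ((C ×ˢ C).indicator (fun _ => (1 : ℕ)) y) * G y
        ∂(prodKernel Q z) = ρ * ∫⁻ y in C ×ˢ C, G y ∂(prodKernel Q z) := by
      rw [← lintegral_const_mul ρ hG]
      refine setLIntegral_congr_fun_ae hCC (ae_of_all _ fun y hy => ?_)
      rw [Set.indicator_of_mem hy, pow_one]
    have hCcside : ∫⁻ y in (C ×ˢ C)ᶜ, ρ ^ ((C ×ˢ C).indicator (fun _ => (1 : ℕ)) y) * G y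
        ∂(prodKernel Q z) = ∫⁻ y in (C ×ˢ C)ᶜ, G y ∂(prodKernel Q z) := by
      refine setLIntegral_congr_fun_ae hCC.compl (ae_of_all _ fun y hy => ?_)
      rw [Set.indicator_of_notMem hy, pow_zero, one_mul]
    have hout : ∫⁻ y in (C ×ˢ C)ᶜ, p y ∂(prodKernel Q z)
        ≤ ∫⁻ y in (C ×ˢ C)ᶜ, p y.swap ∂(prodKernel Q z)
          + ∫⁻ y in (C ×ˢ C)ᶜ, G y ∂(prodKernel Q z) := by
      rw [← lintegral_add_left hpsw]
      exact lintegral_mono hpG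
    calc ∫⁻ y, p y ∂(prodKernel Q z)
        = ∫⁻ y in C ×ˢ C, p y ∂(prodKernel Q z)
          + ∫⁻ y in (C ×ˢ C)ᶜ, p y ∂(prodKernel Q z) := (lintegral_add_compl _ hCC).symm
      _ ≤ (∫⁻ y in C ×ˢ C, p y.swap ∂(prodKernel Q z)
            + ρ * ∫⁻ y in C ×ˢ C, G y ∂(prodKernel Q z))
          + (∫⁻ y in (C ×ˢ C)ᶜ, p y.swap ∂(prodKernel Q z)
            + ∫⁻ y in (C ×ˢ C)ᶜ, G y ∂(prodKernel Q z)) := add_le_add core hout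
      _ = (∫⁻ y in C ×ˢ C, p y.swap ∂(prodKernel Q z)
            + ∫⁻ y in (C ×ˢ C)ᶜ, p y.swap ∂(prodKernel Q z))
          + (ρ * ∫⁻ y in C ×ˢ C, G y ∂(prodKernel Q z)
            + ∫⁻ y in (C ×ˢ C)ᶜ, G y ∂(prodKernel Q z)) := by ring
      _ = _ := by
          rw [lintegral_add_compl _ hCC, ← hCCside, ← hCcside, lintegral_add_compl _ hCC]
end Aux4

section Aux5
open Function Set
variable {X : Type*} [MeasurableSpace X] {Q : Kernel X X} [IsMarkovKernel Q]
  {C : Set X} {lam : Measure X} {em ep : ℝ}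

lemma hmm_key (hC : IsLDSet Q C lam em ep) {g : ℕ → X → ℝ≥0∞} (hg : ∀ i, Measurable (g i))
    (μ : Measure (X × X)) :
    ∀ (n : ℕ) (p G : X × X → ℝ≥0∞), Measurable p → Measurable G →
      (∀ w, p w ≤ p w.swap + G w) →
      ∫⁻ ω, (∏ i ∈ Finset.range n, gbar g i (ω i)) * p (ω n)
          ∂(pathMeasure (prodKernel Q) μ n)
        ≤ (∫⁻ ω, (∏ i ∈ Finset.range n, gbar g i (ω i)) * p ((ω n).swap)
            ∂(pathMeasure (prodKernel Q) μ n))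
          + ∫⁻ ω, (∏ i ∈ Finset.range n, gbar g i (ω i))
              * (ENNReal.ofReal (1 - (em / ep) ^ 2) ^ jointVisits C n ω * G (ω n))
            ∂(pathMeasure (prodKernel Q) μ n) := by
  set ρ : ℝ≥0∞ := ENNReal.ofReal (1 - (em / ep) ^ 2) with hρdef
  intro n
  induction n with
  | zero =>
    intro p G hp hG hpG
    have hpsw : Measurable fun w : X × X => p w.swap := hp.comp measurable_swap
    rw [lintegral_pathMeasure_zero _ _ (by simpa [Function.comp_def] using hp.comp (measurable_pi_apply 0)),
      lintegral_pathMeasure_zero _ _ (by simpa [Function.comp_def] using hpsw.comp (measurable_pi_apply 0)),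
      lintegral_pathMeasure_zero _ _ (by simpa [jointVisits, Function.comp_def] using hG.comp (measurable_pi_apply 0))]
    simp only [Finset.range_zero, Finset.prod_empty, one_mul, jointVisits, Finset.sum_empty,
      pow_zero]
    calc ∫⁻ x, p x ∂μ ≤ ∫⁻ x, p x.swap + G x ∂μ := lintegral_mono hpG
      _ = _ := lintegral_add_left hpsw _
  | succ n ih =>
    intro p G hp hG hpG
    have hpsw : Measurable fun w : X × X => p w.swap := hp.comp measurable_swap
    set indN : X × X → ℕ := (C ×ˢ C).indicator (fun _ => (1 : ℕ)) with hindN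
    set p' : X × X → ℝ≥0∞ := fun z => gbar g n z * ∫⁻ y, p y ∂(prodKernel Q z) with hp'def
    set G' : X × X → ℝ≥0∞ :=
      fun z => gbar g n z * ∫⁻ y, ρ ^ (indN z * indN y) * G y ∂(prodKernel Q z) with hG'def
    have hinnmeas : ∀ w : X × X, Measurable fun y => ρ ^ (indN w * indN y) * G y := by
      intro w
      exact (measurable_from_nat.comp
        ((measurable_const.mul (measurable_indN hC.1) : Measurable fun y => indN w * indN y))).mul
        hG
    have hp'meas : Measurable p' :=
      (measurable_gbar hg n).mul
        (Measurable.lintegral_kernel_prod_right' (κ := prodKernel Q) (hp.comp measurable_snd))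
    have hG'meas : Measurable G' := by
      have hin : Measurable fun q : (X × X) × (X × X) => ρ ^ (indN q.1 * indN q.2) * G q.2 :=
        (measurable_from_nat.comp
          (((measurable_indN hC.1).comp measurable_fst).mul
            ((measurable_indN hC.1).comp measurable_snd))).mul (hG.comp measurable_snd)
      exact (measurable_gbar hg n).mul
        (Measurable.lintegral_kernel_prod_right' (κ := prodKernel Q)
          (f := fun q : (X × X) × (X × X) => ρ ^ (indN q.1 * indN q.2) * G q.2) hin)
    have hswap' : ∀ z : X × X, p' z.swap = gbar g n z * ∫⁻ y, p y.swap ∂(prodKernel Q z) := by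
      intro z
      rw [hp'def]
      simp only
      rw [gbar_swap, prodKernel_swap, lintegral_map hp measurable_swap]
    have hp'G' : ∀ w, p' w ≤ p' w.swap + G' w := by
      intro w
      rw [hswap' w, hp'def, hG'def]
      simp only
      rw [← mul_add]
      exact mul_le_mul_right (hmm_step hC hp hG hpG w) _
    -- update congruence facts
    have hprod_upd : ∀ (ω : ℕ → X × X) (y : X × X),
        (∏ i ∈ Finset.range (n + 1), gbar g i (Function.update ω (n + 1) y i))
          = ∏ i ∈ Finset.range (n + 1), gbar g i (ω i) := by
      intro ω y
      refine Finset.prod_congr rfl fun i hi => ?_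
      rw [Function.update_of_ne (Nat.ne_of_lt (Finset.mem_range.mp hi))]
    have hjv_upd : ∀ (ω : ℕ → X × X) (y : X × X),
        jointVisits C (n + 1) (Function.update ω (n + 1) y)
          = jointVisits C n ω + indN (ω n) * indN y := by
      intro ω y
      unfold jointVisits
      rw [Finset.sum_range_succ]
      congr 1
      · refine Finset.sum_congr rfl fun i hi => ?_
        have hi' := Finset.mem_range.mp hi
        rw [Function.update_of_ne (by omega : i ≠ n + 1),
          Function.update_of_ne (by omega : i + 1 ≠ n + 1)]
      · rw [Function.update_of_ne (by omega : n ≠ n + 1), Function.update_self]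
    have e1 : ∫⁻ ω, (∏ i ∈ Finset.range (n + 1), gbar g i (ω i)) * p (ω (n + 1))
          ∂(pathMeasure (prodKernel Q) μ (n + 1))
        = ∫⁻ ω, (∏ i ∈ Finset.range n, gbar g i (ω i)) * p' (ω n)
          ∂(pathMeasure (prodKernel Q) μ n) := by
      have hF1 : Measurable fun ω : ℕ → X × X =>
          (∏ i ∈ Finset.range (n + 1), gbar g i (ω i)) * p (ω (n + 1)) :=
        (measurable_prod_gbar hg (n + 1)).mul (hp.comp (measurable_pi_apply (n + 1)))
      rw [lintegral_pathMeasure_succ (prodKernel Q) μ n hF1]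
      refine lintegral_congr fun ω => ?_
      calc ∫⁻ y, (∏ i ∈ Finset.range (n + 1), gbar g i (Function.update ω (n + 1) y i))
              * p (Function.update ω (n + 1) y (n + 1)) ∂(prodKernel Q (ω n))
          = ∫⁻ y, (∏ i ∈ Finset.range (n + 1), gbar g i (ω i)) * p y
              ∂(prodKernel Q (ω n)) := by
            refine lintegral_congr fun y => ?_
            rw [hprod_upd, Function.update_self]
        _ = (∏ i ∈ Finset.range (n + 1), gbar g i (ω i)) * ∫⁻ y, p y ∂(prodKernel Q (ω n)) :=
            lintegral_const_mul _ hp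
        _ = (∏ i ∈ Finset.range n, gbar g i (ω i)) * p' (ω n) := by
            rw [Finset.prod_range_succ, hp'def, mul_assoc]
    have e2 : ∫⁻ ω, (∏ i ∈ Finset.range (n + 1), gbar g i (ω i)) * p ((ω (n + 1)).swap)
          ∂(pathMeasure (prodKernel Q) μ (n + 1))
        = ∫⁻ ω, (∏ i ∈ Finset.range n, gbar g i (ω i)) * p' ((ω n).swap)
          ∂(pathMeasure (prodKernel Q) μ n) := by
      have hF2 : Measurable fun ω : ℕ → X × X =>
          (∏ i ∈ Finset.range (n + 1), gbar g i (ω i)) * p (ω (n + 1)).swap :=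
        (measurable_prod_gbar hg (n + 1)).mul (hpsw.comp (measurable_pi_apply (n + 1)))
      rw [lintegral_pathMeasure_succ (prodKernel Q) μ n hF2]
      refine lintegral_congr fun ω => ?_
      calc ∫⁻ y, (∏ i ∈ Finset.range (n + 1), gbar g i (Function.update ω (n + 1) y i))
              * p ((Function.update ω (n + 1) y (n + 1)).swap) ∂(prodKernel Q (ω n))
          = ∫⁻ y, (∏ i ∈ Finset.range (n + 1), gbar g i (ω i)) * p y.swap
              ∂(prodKernel Q (ω n)) := by
            refine lintegral_congr fun y => ?_
            rw [hprod_upd, Function.update_self]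
        _ = (∏ i ∈ Finset.range (n + 1), gbar g i (ω i))
              * ∫⁻ y, p y.swap ∂(prodKernel Q (ω n)) := lintegral_const_mul _ hpsw
        _ = (∏ i ∈ Finset.range n, gbar g i (ω i)) * p' ((ω n).swap) := by
            rw [Finset.prod_range_succ, hswap' (ω n), mul_assoc]
    have e3 : ∫⁻ ω, (∏ i ∈ Finset.range (n + 1), gbar g i (ω i))
            * (ρ ^ jointVisits C (n + 1) ω * G (ω (n + 1)))
          ∂(pathMeasure (prodKernel Q) μ (n + 1))
        = ∫⁻ ω, (∏ i ∈ Finset.range n, gbar g i (ω i))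
            * (ρ ^ jointVisits C n ω * G' (ω n))
          ∂(pathMeasure (prodKernel Q) μ n) := by
      have hF3 : Measurable fun ω : ℕ → X × X =>
          (∏ i ∈ Finset.range (n + 1), gbar g i (ω i))
            * (ρ ^ jointVisits C (n + 1) ω * G (ω (n + 1))) :=
        (measurable_prod_gbar hg (n + 1)).mul
          ((measurable_rhopow hC.1 ρ (n + 1)).mul (hG.comp (measurable_pi_apply (n + 1))))
      rw [lintegral_pathMeasure_succ (prodKernel Q) μ n hF3]
      refine lintegral_congr fun ω => ?_
      calc ∫⁻ y, (∏ i ∈ Finset.range (n + 1), gbar g i (Function.update ω (n + 1) y i))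
              * (ρ ^ jointVisits C (n + 1) (Function.update ω (n + 1) y)
                * G (Function.update ω (n + 1) y (n + 1))) ∂(prodKernel Q (ω n))
          = ∫⁻ y, ((∏ i ∈ Finset.range (n + 1), gbar g i (ω i)) * ρ ^ jointVisits C n ω)
              * (ρ ^ (indN (ω n) * indN y) * G y) ∂(prodKernel Q (ω n)) := by
            refine lintegral_congr fun y => ?_
            rw [hprod_upd, hjv_upd, Function.update_self, pow_add]
            ring
        _ = ((∏ i ∈ Finset.range (n + 1), gbar g i (ω i)) * ρ ^ jointVisits C n ω)
              * ∫⁻ y, ρ ^ (indN (ω n) * indN y) * G y ∂(prodKernel Q (ω n)) :=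
            lintegral_const_mul _ (hinnmeas (ω n))
        _ = (∏ i ∈ Finset.range n, gbar g i (ω i))
              * (ρ ^ jointVisits C n ω * G' (ω n)) := by
            rw [Finset.prod_range_succ, hG'def]
            ring
    rw [e1, e2, e3]
    exact ih p' G' hp'meas hG'meas hp'G'

end Aux5

section Aux6
open Function Set
variable {X : Type*} [MeasurableSpace X] {Q : Kernel X X} [IsMarkovKernel Q]

lemma hmm_measurable_S :
    Measurable (fun ω : ℕ → X × X => (fun i => (ω i).swap)) :=
  measurable_pi_lambda _ fun i => measurable_swap.comp (measurable_pi_apply i)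

lemma pathMeasure_map_swap (μ : Measure (X × X)) (n : ℕ) :
    pathMeasure (prodKernel Q) (μ.map Prod.swap) n
      = (pathMeasure (prodKernel Q) μ n).map (fun ω i => (ω i).swap) := by
  induction n with
  | zero =>
    show (μ.map Prod.swap).map (fun z (_ : ℕ) => z)
        = ((μ.map (fun z (_ : ℕ) => z)).map (fun ω i => (ω i).swap))
    rw [Measure.map_map (measurable_pi_lambda (fun (z : X × X) (_ : ℕ) => z)
        fun _ => measurable_id) measurable_swap,
      Measure.map_map hmm_measurable_S (measurable_pi_lambda (fun (z : X × X) (_ : ℕ) => z)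
        fun _ => measurable_id)]
    rfl
  | succ n ih =>
    show (pathMeasure (prodKernel Q) (μ.map Prod.swap) n).bind
        (fun ω => ((prodKernel Q) (ω n)).map (fun y => Function.update ω (n + 1) y))
        = ((pathMeasure (prodKernel Q) μ n).bind
          (fun ω => ((prodKernel Q) (ω n)).map (fun y => Function.update ω (n + 1) y))).map
          (fun ω i => (ω i).swap)
    ext s hs
    have hFm : Measurable fun ω : ℕ → X × X =>
        ((prodKernel Q) (ω n)).map (fun y => Function.update ω (n + 1) y) s :=
      (Measure.measurable_coe hs).comp (hmm_measurable_step (prodKernel Q) n)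
    rw [Measure.bind_apply hs (hmm_measurable_step (prodKernel Q) n).aemeasurable, ih,
      lintegral_map hFm hmm_measurable_S,
      Measure.map_apply hmm_measurable_S hs,
      Measure.bind_apply (hmm_measurable_S hs) (hmm_measurable_step (prodKernel Q) n).aemeasurable]
    refine lintegral_congr fun ω => ?_
    have hfun : ∀ y : X × X,
        (fun i => (Function.update ω (n + 1) y i).swap)
          = Function.update (fun i => (ω i).swap) (n + 1) y.swap := by
      intro y
      funext i
      by_cases hi : i = n + 1
      · subst hi; rw [Function.update_self, Function.update_self]
      · rw [Function.update_of_ne hi, Function.update_of_ne hi]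
    calc (prodKernel Q ((fun i => (ω i).swap) n)).map
            (fun y => Function.update (fun i => (ω i).swap) (n + 1) y) s
        = ((prodKernel Q (ω n)).map Prod.swap).map
            (fun y => Function.update (fun i => (ω i).swap) (n + 1) y) s := by
          rw [show ((fun i => (ω i).swap) n) = (ω n).swap from rfl, prodKernel_swap]
      _ = (prodKernel Q (ω n))
            ((fun y : X × X =>
              Function.update (fun i => (ω i).swap) (n + 1) y.swap) ⁻¹' s) := by
          rw [Measure.map_map (g := fun y : X × X =>
              Function.update (fun i => (ω i).swap) (n + 1) y) (f := Prod.swap)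
              (measurable_update _) measurable_swap,
            Measure.map_apply (f := (fun y : X × X =>
              Function.update (fun i => (ω i).swap) (n + 1) y) ∘ Prod.swap)
              ((measurable_update _).comp measurable_swap) hs]
          rfl
      _ = (prodKernel Q (ω n))
            ((fun y => Function.update ω (n + 1) y) ⁻¹' ((fun ω i => (ω i).swap) ⁻¹' s)) := by
          congr 1
          ext y
          simp only [Set.mem_preimage, hfun y]
      _ = (prodKernel Q (ω n)).map (fun y => Function.update ω (n + 1) y)
            ((fun ω i => (ω i).swap) ⁻¹' s) := by
          rw [Measure.map_apply (measurable_update _) (hmm_measurable_S hs)]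
end Aux6

/-- for an LD-set `C`, probability measures `ν, ν'` and nonnegative measurable
functions `g_0,…,g_n` with `E^Q_ν[∏ g_i(X_i)] < ∞` and `E^Q_{ν'}[∏ g_i(X_i)] < ∞`, the quantity
`Δ_n(ν,ν',{g_i}) = sup_A |E^{Q̄}_{ν⊗ν'}[∏ ḡ_i(X̄_i) 1_A(X_n)] − E^{Q̄}_{ν'⊗ν}[∏ ḡ_i(X̄_i) 1_A(X_n)]|`
satisfies `Δ_n ≤ E^{Q̄}_{ν⊗ν'}[∏ ḡ_i(X̄_i) ρ_C^{N_{C,n}}]`, with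
`ρ_C = 1 − (ε⁻_C/ε⁺_C)²` and `N_{C,n} = Σ_{i<n} 1_{C×C}(X̄_i) 1_{C×C}(X̄_{i+1})`. -/
theorem forgetting_hmm_stmt2 {X : Type*} [MeasurableSpace X]
    (Q : Kernel X X) [IsMarkovKernel Q]
    (C : Set X) (lam : Measure X) (em ep : ℝ) (hC : IsLDSet Q C lam em ep)
    (ν ν' : Measure X) [IsProbabilityMeasure ν] [IsProbabilityMeasure ν']
    (n : ℕ) (g : ℕ → X → ℝ≥0∞) (hg : ∀ i, Measurable (g i))
    (hint : (∫⁻ ω, ∏ i ∈ Finset.range (n + 1), g i (ω i) ∂(pathMeasure Q ν n)) ≠ ⊤)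
    (hint' : (∫⁻ ω, ∏ i ∈ Finset.range (n + 1), g i (ω i) ∂(pathMeasure Q ν' n)) ≠ ⊤) :
    ENNReal.ofReal
        (⨆ A : {S : Set X // MeasurableSet S},
          |(∫⁻ ω, (∏ i ∈ Finset.range (n + 1), g i (ω i).1 * g i (ω i).2) *
                (A : Set X).indicator (fun _ => (1 : ℝ≥0∞)) (ω n).1
              ∂(pathMeasure (prodKernel Q) (ν.prod ν') n)).toReal -
           (∫⁻ ω, (∏ i ∈ Finset.range (n + 1), g i (ω i).1 * g i (ω i).2) *
                (A : Set X).indicator (fun _ => (1 : ℝ≥0∞)) (ω n).1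
              ∂(pathMeasure (prodKernel Q) (ν'.prod ν) n)).toReal|)
      ≤ ∫⁻ ω, (∏ i ∈ Finset.range (n + 1), g i (ω i).1 * g i (ω i).2) *
            ENNReal.ofReal (1 - (em / ep) ^ 2) ^ jointVisits C n ω
          ∂(pathMeasure (prodKernel Q) (ν.prod ν') n) := by
  classical
  have hC' : IsLDSet Q C lam em ep := hC
  set ρ : ℝ≥0∞ := ENNReal.ofReal (1 - (em / ep) ^ 2) with hρ
  set P : Measure (ℕ → X × X) := pathMeasure (prodKernel Q) (ν.prod ν') n with hP
  set D : ℝ≥0∞ := ∫⁻ ω, (∏ i ∈ Finset.range (n + 1), g i (ω i).1 * g i (ω i).2) *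
      ρ ^ jointVisits C n ω ∂P with hD
  by_cases hDtop : D = ⊤
  · rw [hDtop]; exact le_top
  refine ENNReal.ofReal_le_of_le_toReal ?_
  refine Real.iSup_le (fun A => ?_) ENNReal.toReal_nonneg
  set G : X × X → ℝ≥0∞ := gbar g n with hGdef
  have hGmeas : Measurable G := measurable_gbar hg n
  have hind : Measurable ((A : Set X).indicator (fun _ => (1 : ℝ≥0∞))) :=
    measurable_const.indicator A.2
  have hind_le : ∀ x : X, (A : Set X).indicator (fun _ => (1 : ℝ≥0∞)) x ≤ 1 := by
    intro x
    by_cases hx : x ∈ (A : Set X) <;> simp [hx]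
  set p : X × X → ℝ≥0∞ :=
    fun z => gbar g n z * (A : Set X).indicator (fun _ => (1 : ℝ≥0∞)) z.1 with hpdef
  set q : X × X → ℝ≥0∞ := fun z => p z.swap with hqdef
  have hpmeas : Measurable p := hGmeas.mul (hind.comp measurable_fst)
  have hqmeas : Measurable q := hpmeas.comp measurable_swap
  have hpleG : ∀ w, p w ≤ G w := by
    intro w
    calc p w ≤ gbar g n w * 1 := mul_le_mul_right (hind_le _) _
      _ = G w := by rw [mul_one, hGdef]
  have hqleG : ∀ w, q w ≤ G w := by
    intro w
    calc q w ≤ gbar g n w.swap * 1 := mul_le_mul_right (hind_le _) _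
      _ = G w := by rw [mul_one, hGdef, gbar_swap]
  have hpG : ∀ w, p w ≤ p w.swap + G w := fun w => le_add_left (hpleG w)
  have hqG : ∀ w, q w ≤ q w.swap + G w := fun w => le_add_left (hqleG w)
  have key1 := hmm_key hC' hg (ν.prod ν') n p G hpmeas hGmeas hpG
  have key2 := hmm_key hC' hg (ν.prod ν') n q G hqmeas hGmeas hqG
  rw [← hρ, ← hP] at key1 key2
  -- identify the three integrals
  set a : ℝ≥0∞ := ∫⁻ ω, (∏ i ∈ Finset.range (n + 1), g i (ω i).1 * g i (ω i).2) *
      (A : Set X).indicator (fun _ => (1 : ℝ≥0∞)) (ω n).1 ∂P with ha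
  set b : ℝ≥0∞ := ∫⁻ ω, (∏ i ∈ Finset.range (n + 1), g i (ω i).1 * g i (ω i).2) *
      (A : Set X).indicator (fun _ => (1 : ℝ≥0∞)) (ω n).1
      ∂(pathMeasure (prodKernel Q) (ν'.prod ν) n) with hb
  have hA1 : a = ∫⁻ ω, (∏ i ∈ Finset.range n, gbar g i (ω i)) * p (ω n) ∂P := by
    refine lintegral_congr fun ω => ?_
    simp only [hpdef, gbar]
    rw [Finset.prod_range_succ]
    ring
  have hB1 : b = ∫⁻ ω, (∏ i ∈ Finset.range n, gbar g i (ω i)) * q (ω n) ∂P := by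
    have hprodswap : pathMeasure (prodKernel Q) (ν'.prod ν) n
        = P.map (fun ω i => (ω i).swap) := by
      rw [hP, ← pathMeasure_map_swap, Measure.prod_swap]
    have hFb : Measurable fun ω : ℕ → X × X =>
        (∏ i ∈ Finset.range (n + 1), g i (ω i).1 * g i (ω i).2) *
          (A : Set X).indicator (fun _ => (1 : ℝ≥0∞)) (ω n).1 := by
      refine Measurable.mul ?_ (hind.comp (measurable_fst.comp (measurable_pi_apply n)))
      exact measurable_prod_gbar hg (n + 1)
    rw [hb, hprodswap, lintegral_map hFb hmm_measurable_S]
    refine lintegral_congr fun ω => ?_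
    simp only [hpdef, hqdef, gbar, Prod.fst_swap, Prod.snd_swap]
    have hcomm : (∏ i ∈ Finset.range (n + 1), g i (ω i).2 * g i (ω i).1)
        = ∏ i ∈ Finset.range (n + 1), g i (ω i).1 * g i (ω i).2 :=
      Finset.prod_congr rfl fun i _ => mul_comm _ _
    rw [hcomm, Finset.prod_range_succ]
    ring
  have hD1 : D = ∫⁻ ω, (∏ i ∈ Finset.range n, gbar g i (ω i))
      * (ρ ^ jointVisits C n ω * G (ω n)) ∂P := by
    refine lintegral_congr fun ω => ?_
    simp only [hGdef, gbar]
    rw [Finset.prod_range_succ]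
    ring
  have hA2 : ∫⁻ ω, (∏ i ∈ Finset.range n, gbar g i (ω i)) * q ((ω n).swap) ∂P = a := by
    rw [hA1]
    refine lintegral_congr fun ω => ?_
    simp only [hqdef, Prod.swap_swap]
  have hkey1 : a ≤ b + D := by
    rw [hA1, hB1, hD1]
    exact key1
  have hkey2 : b ≤ a + D := by
    rw [hB1, ← hA2, hD1]
    exact key2
  -- real arithmetic
  by_cases hatop : a = ⊤
  · have hbtop : b = ⊤ := by
      by_contra hbne
      have h1 : (⊤ : ℝ≥0∞) ≤ b + D := hatop ▸ hkey1
      rcases ENNReal.add_eq_top.mp (top_le_iff.mp h1) with h | h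
      · exact hbne h
      · exact hDtop h
    rw [hatop, hbtop]
    simp
  · have hbne : b ≠ ⊤ := by
      intro hbtop
      have h1 : (⊤ : ℝ≥0∞) ≤ a + D := hbtop ▸ hkey2
      rcases ENNReal.add_eq_top.mp (top_le_iff.mp h1) with h | h
      · exact hatop h
      · exact hDtop h
    refine abs_sub_le_iff.mpr ⟨?_, ?_⟩
    · have h1 := ENNReal.toReal_mono (ENNReal.add_ne_top.mpr ⟨hbne, hDtop⟩) hkey1
      rw [ENNReal.toReal_add hbne hDtop] at h1
      linarith
    · have h1 := ENNReal.toReal_mono (ENNReal.add_ne_top.mpr ⟨hatop, hDtop⟩) hkey2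
      rw [ENNReal.toReal_add hatop hDtop] at h1
      linarith
end

section
/- Let Q be a Markov kernel on (X,𝒳), g : X×Y → (0,∞) a measurable likelihood, D ∈ 𝒳, and ν a probability measure with νQ1_D > 0. Then for any p ≥ 1 and any (y₀,y₁) ∈ Y², ( [ log Φ_{ν,D}(y₀,y₁) − log(νQ1_D) ]_- )^p ≤ 2^{p−1} (νQ1_D)^{-1} ∬ ν(dx₀) Q(x₀,dx₁) 1_D(x₁) [ ((log g(x₀,y₀))_-)^p + ((log g(x₁,y₁))_-)^p ]. -/
open MeasureTheory ProbabilityTheory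
open scoped ENNReal

lemma aux_le_rpow_add_one (x : ℝ≥0∞) {p : ℝ} (hp : 1 ≤ p) : x ≤ x ^ p + 1 := by
  rcases le_total x 1 with h | h
  · exact h.trans le_add_self
  · calc x = x ^ (1 : ℝ) := (ENNReal.rpow_one x).symm
      _ ≤ x ^ p := ENNReal.rpow_le_rpow_of_exponent_le h hp
      _ ≤ x ^ p + 1 := le_self_add

lemma key_jensen {α : Type*} [MeasurableSpace α] (μ : Measure α)
    (G a0 a1 : α → ℝ) (ha0m : Measurable a0) (ha1m : Measurable a1)
    (ha0 : ∀ z, 0 ≤ a0 z) (ha1 : ∀ z, 0 ≤ a1 z)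
    (hG : ∀ z, Real.exp (-(a0 z + a1 z)) ≤ G z)
    (hm0 : μ Set.univ ≠ 0) (hm1 : μ Set.univ ≤ 1)
    {p : ℝ} (hp : 1 ≤ p) :
    ENNReal.ofReal ((max (Real.log (μ Set.univ).toReal -
        Real.log (∫⁻ z, ENNReal.ofReal (G z) ∂μ).toReal) 0) ^ p)
      ≤ ENNReal.ofReal (2 ^ (p - 1)) * (μ Set.univ)⁻¹ *
          ∫⁻ z, ENNReal.ofReal (a0 z ^ p + a1 z ^ p) ∂μ := by
  have hp0 : (0 : ℝ) ≤ p := zero_le_one.trans hp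
  have hpne : p ≠ 0 := by positivity
  set m : ℝ≥0∞ := μ Set.univ with hmdef
  have hmtop : m ≠ ⊤ := (hm1.trans_lt ENNReal.one_lt_top).ne
  set Φ : ℝ≥0∞ := ∫⁻ z, ENNReal.ofReal (G z) ∂μ with hΦdef
  set aE : α → ℝ≥0∞ := fun z => ENNReal.ofReal (a0 z) + ENNReal.ofReal (a1 z) with haEdef
  have haEm : Measurable aE := ha0m.ennreal_ofReal.add ha1m.ennreal_ofReal
  set A : ℝ≥0∞ := ∫⁻ z, aE z ∂μ with hAdef
  set I : ℝ≥0∞ := ∫⁻ z, ENNReal.ofReal (a0 z ^ p + a1 z ^ p) ∂μ with hIdef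
  set J : ℝ≥0∞ := ∫⁻ z, (aE z) ^ p ∂μ with hJdef
  have h2pos : (0 : ℝ) < 2 ^ (p - 1) := Real.rpow_pos_of_pos two_pos _
  have h2ne0 : ENNReal.ofReal (2 ^ (p - 1)) ≠ 0 := by
    simp [ENNReal.ofReal_eq_zero, not_le, h2pos]
  have hminv0 : m⁻¹ ≠ 0 := ENNReal.inv_ne_zero.2 hmtop
  -- pointwise 2^{p-1} inequality
  have hptw : ∀ z, (aE z) ^ p ≤ ENNReal.ofReal (2 ^ (p - 1)) *
      ENNReal.ofReal (a0 z ^ p + a1 z ^ p) := by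
    intro z
    have h := ENNReal.rpow_add_le_mul_rpow_add_rpow (ENNReal.ofReal (a0 z))
      (ENNReal.ofReal (a1 z)) hp
    have e2 : (2 : ℝ≥0∞) ^ (p - 1) = ENNReal.ofReal (2 ^ (p - 1)) := by
      rw [← ENNReal.ofReal_rpow_of_pos two_pos, ENNReal.ofReal_ofNat]
    have e0 : ENNReal.ofReal (a0 z) ^ p = ENNReal.ofReal (a0 z ^ p) :=
      ENNReal.ofReal_rpow_of_nonneg (ha0 z) hp0
    have e1 : ENNReal.ofReal (a1 z) ^ p = ENNReal.ofReal (a1 z ^ p) :=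
      ENNReal.ofReal_rpow_of_nonneg (ha1 z) hp0
    calc (aE z) ^ p ≤ (2 : ℝ≥0∞) ^ (p - 1) *
        (ENNReal.ofReal (a0 z) ^ p + ENNReal.ofReal (a1 z) ^ p) := h
      _ = ENNReal.ofReal (2 ^ (p - 1)) * ENNReal.ofReal (a0 z ^ p + a1 z ^ p) := by
          rw [e2, e0, e1, ENNReal.ofReal_add (Real.rpow_nonneg (ha0 z) p) (Real.rpow_nonneg (ha1 z) p)]
  have hJI : J ≤ ENNReal.ofReal (2 ^ (p - 1)) * I := by
    calc J ≤ ∫⁻ z, ENNReal.ofReal (2 ^ (p - 1)) *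
          ENNReal.ofReal (a0 z ^ p + a1 z ^ p) ∂μ := lintegral_mono hptw
      _ = ENNReal.ofReal (2 ^ (p - 1)) * I := by
          rw [hIdef, lintegral_const_mul (f := fun z => ENNReal.ofReal (a0 z ^ p + a1 z ^ p)) _ ((ha0m.pow_const p).add (ha1m.pow_const p)).ennreal_ofReal]
  by_cases hΦtop : Φ = ⊤
  · -- LHS is zero
    have hmt1 : m.toReal ≤ 1 := by
      simpa using ENNReal.toReal_mono ENNReal.one_ne_top hm1
    have : Real.log m.toReal - Real.log Φ.toReal ≤ 0 := by
      rw [hΦtop]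
      simp [Real.log_nonpos ENNReal.toReal_nonneg hmt1]
    rw [max_eq_right this, Real.zero_rpow hpne, ENNReal.ofReal_zero]
    positivity
  by_cases hItop : I = ⊤
  · refine le_trans le_top ?_
    rw [hItop, ENNReal.mul_top (mul_ne_zero h2ne0 hminv0)]
  -- finiteness of A
  have hJtop : J ≠ ⊤ := by
    refine (hJI.trans_lt ?_).ne
    exact ENNReal.mul_lt_top ENNReal.ofReal_lt_top (lt_top_iff_ne_top.2 hItop)
  have hAtop : A ≠ ⊤ := by
    have : A ≤ J + m := by
      calc A ≤ ∫⁻ z, ((aE z) ^ p + 1) ∂μ := lintegral_mono fun z => aux_le_rpow_add_one _ hp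
        _ = J + m := by rw [lintegral_add_right _ measurable_const, lintegral_one]
    exact (this.trans_lt (ENNReal.add_lt_top.2 ⟨hJtop.lt_top, hmtop.lt_top⟩)).ne
  set c : ℝ := (A / m).toReal with hcdef
  have hc : 0 ≤ c := ENNReal.toReal_nonneg
  have hdivtop : A / m ≠ ⊤ := (ENNReal.div_lt_top hAtop hm0).ne
  have hAm : ENNReal.ofReal c * m = A := by
    rw [hcdef, ENNReal.ofReal_toReal hdivtop, ENNReal.div_mul_cancel hm0 hmtop]
  -- lower bound on Φ
  set L : ℝ≥0∞ := ENNReal.ofReal (Real.exp (-c)) with hLdef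
  set K : ℝ≥0∞ := ENNReal.ofReal (Real.exp (-c) * (1 + c)) with hKdef
  have hpt : ∀ z, K - L * aE z ≤ ENNReal.ofReal (G z) := by
    intro z
    have hexp : Real.exp (-c) * (1 + c) - Real.exp (-c) * (a0 z + a1 z) ≤ G z := by
      have h1 : (c - (a0 z + a1 z)) + 1 ≤ Real.exp (c - (a0 z + a1 z)) :=
        Real.add_one_le_exp _
      have h2 : Real.exp (-(a0 z + a1 z)) = Real.exp (-c) * Real.exp (c - (a0 z + a1 z)) := by
        rw [← Real.exp_add]; ring_nf
      have h3 := hG z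
      nlinarith [Real.exp_pos (-c)]
    have hLa : ENNReal.ofReal (Real.exp (-c) * (a0 z + a1 z)) = L * aE z := by
      rw [ENNReal.ofReal_mul (Real.exp_pos _).le, ENNReal.ofReal_add (ha0 z) (ha1 z)]
    rw [← hLa, hKdef,
      ← ENNReal.ofReal_sub _ (mul_nonneg (Real.exp_pos _).le (add_nonneg (ha0 z) (ha1 z)))]
    exact ENNReal.ofReal_le_ofReal hexp
  have hΦlb : L * m ≤ Φ := by
    have hKL : K - L * ENNReal.ofReal c = L := by
      rw [hKdef, hLdef, ← ENNReal.ofReal_mul (Real.exp_pos _).le,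
        ← ENNReal.ofReal_sub _ (by positivity)]
      congr 1
      ring
    have step : K * m - (L * ENNReal.ofReal c) * m ≤ Φ := by
      have hsub := lintegral_sub_le (fun z => L * aE z) (fun _ => K)
        (haEm.const_mul L) (μ := μ)
      rw [lintegral_const, lintegral_const_mul _ haEm] at hsub
      calc K * m - (L * ENNReal.ofReal c) * m
          = K * m - L * A := by rw [mul_assoc, hAm]
        _ ≤ ∫⁻ z, ((fun _ => K) z - (fun z => L * aE z) z) ∂μ := hsub
        _ ≤ Φ := lintegral_mono hpt
    calc L * m = (K - L * ENNReal.ofReal c) * m := by rw [hKL]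
      _ = K * m - (L * ENNReal.ofReal c) * m :=
          ENNReal.sub_mul (fun _ _ => hmtop)
      _ ≤ Φ := step
  -- to real + logs
  have hmt : 0 < m.toReal := ENNReal.toReal_pos hm0 hmtop
  have hΦt : Real.exp (-c) * m.toReal ≤ Φ.toReal := by
    have := ENNReal.toReal_mono hΦtop hΦlb
    rwa [ENNReal.toReal_mul, ENNReal.toReal_ofReal (Real.exp_pos _).le] at this
  have hΦt0 : 0 < Φ.toReal := lt_of_lt_of_le (by positivity) hΦt
  have hlog : Real.log m.toReal - Real.log Φ.toReal ≤ c := by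
    have hll := Real.log_le_log (by positivity) hΦt
    rw [Real.log_mul (Real.exp_ne_zero _) hmt.ne', Real.log_exp] at hll
    linarith
  have hmax : max (Real.log m.toReal - Real.log Φ.toReal) 0 ≤ c := max_le hlog hc
  have hLHS : ENNReal.ofReal ((max (Real.log m.toReal - Real.log Φ.toReal) 0) ^ p)
      ≤ (A / m) ^ p := by
    calc ENNReal.ofReal ((max (Real.log m.toReal - Real.log Φ.toReal) 0) ^ p)
        ≤ ENNReal.ofReal (c ^ p) :=
          ENNReal.ofReal_le_ofReal (Real.rpow_le_rpow (le_max_right _ _) hmax hp0)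
      _ = (A / m) ^ p := by
          rw [← ENNReal.ofReal_rpow_of_nonneg hc hp0, hcdef, ENNReal.ofReal_toReal hdivtop]
  -- Jensen via Hölder
  have hJensen : (A / m) ^ p ≤ J * m⁻¹ := by
    rcases eq_or_lt_of_le hp with hp1 | hp1
    · have hA' : A = J := by
        rw [hAdef, hJdef]
        refine lintegral_congr fun z => ?_
        rw [← hp1, ENNReal.rpow_one]
      rw [← hp1, ENNReal.rpow_one, hA', ENNReal.div_eq_inv_mul, mul_comm]
    · set q : ℝ := Real.conjExponent p with hqdef
      have hpq : p.HolderConjugate q := Real.HolderConjugate.conjExponent hp1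
      have hold := ENNReal.lintegral_mul_le_Lp_mul_Lq μ hpq haEm.aemeasurable
        (aemeasurable_const (b := (1 : ℝ≥0∞)))
      simp only [Pi.mul_apply, mul_one, ENNReal.one_rpow, lintegral_const, one_mul] at hold
      -- hold : A ≤ J ^ (1/p) * m ^ (1/q)
      have hApow : A ^ p ≤ J * m ^ (p - 1) := by
        calc A ^ p ≤ (J ^ (1 / p) * m ^ (1 / q)) ^ p :=
            ENNReal.rpow_le_rpow hold hp0
          _ = J ^ ((1 / p) * p) * m ^ ((1 / q) * p) := by
              rw [ENNReal.mul_rpow_of_nonneg _ _ hp0, ← ENNReal.rpow_mul, ← ENNReal.rpow_mul]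
          _ = J * m ^ (p - 1) := by
              rw [one_div, inv_mul_cancel₀ hpne, ENNReal.rpow_one]
              congr 1
              rw [one_div, inv_mul_eq_div, hpq.div_conj_eq_sub_one]
      calc (A / m) ^ p = A ^ p / m ^ p := ENNReal.div_rpow_of_nonneg _ _ hp0
        _ ≤ (J * m ^ (p - 1)) / m ^ p := by
            exact ENNReal.div_le_div_right hApow _
        _ = J * (m ^ (p - 1) / m ^ p) := by rw [mul_div_assoc]
        _ = J * m⁻¹ := by
            rw [← ENNReal.rpow_sub _ _ hm0 hmtop,
              show p - 1 - p = -1 by ring, ENNReal.rpow_neg_one]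
  calc ENNReal.ofReal ((max (Real.log m.toReal - Real.log Φ.toReal) 0) ^ p)
      ≤ (A / m) ^ p := hLHS
    _ ≤ J * m⁻¹ := hJensen
    _ ≤ (ENNReal.ofReal (2 ^ (p - 1)) * I) * m⁻¹ := mul_le_mul_left hJI _
    _ = ENNReal.ofReal (2 ^ (p - 1)) * m⁻¹ * I := by ring

/-- `Φ_{ν,D}(y₀,y₁) = ν[g(·,y₀) Q (g(·,y₁) 1_D)]`. -/
noncomputable def Phi {X Y : Type*} [MeasurableSpace X] (Q : Kernel X X)
    (g : X → Y → ℝ) (ν : Measure X) (D : Set X) (y0 y1 : Y) : ℝ≥0∞ :=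
  ∫⁻ x0, ENNReal.ofReal (g x0 y0) * ∫⁻ x1 in D, ENNReal.ofReal (g x1 y1) ∂(Q x0) ∂ν

/-- inequality (24) of the paper: for a positive likelihood `g`, a set `D`
and `ν` with `νQ1_D > 0`, for any `p ≥ 1` and `(y₀,y₁)`,
`([log Φ_{ν,D}(y₀,y₁) − log(νQ1_D)]_-)^p ≤ 2^{p−1} (νQ1_D)⁻¹ ∬ ν(dx₀) Q(x₀,dx₁) 1_D(x₁)
[((log g(x₀,y₀))_-)^p + ((log g(x₁,y₁))_-)^p]`. -/
theorem forgetting_hmm_stmt13 {X Y : Type*} [MeasurableSpace X] [MeasurableSpace Y]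
    (Q : Kernel X X) [IsMarkovKernel Q]
    (g : X → Y → ℝ) (hgmeas : Measurable (Function.uncurry g)) (hgpos : ∀ x y, 0 < g x y)
    (D : Set X) (hD : MeasurableSet D)
    (ν : Measure X) [IsProbabilityMeasure ν]
    (hνQD : 0 < ∫⁻ x, Q x D ∂ν)
    (p : ℝ) (hp : 1 ≤ p) (y0 y1 : Y) :
    ENNReal.ofReal
        ((max (Real.log (∫⁻ x, Q x D ∂ν).toReal -
            Real.log (Phi Q g ν D y0 y1).toReal) 0) ^ p)
      ≤ ENNReal.ofReal (2 ^ (p - 1)) * (∫⁻ x, Q x D ∂ν)⁻¹ *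
          ∫⁻ x0, (∫⁻ x1 in D,
              ENNReal.ofReal ((max (-(Real.log (g x0 y0))) 0) ^ p +
                (max (-(Real.log (g x1 y1))) 0) ^ p) ∂(Q x0)) ∂ν := by
  have mg0 : Measurable fun x => g x y0 := hgmeas.comp (measurable_id.prodMk measurable_const)
  have mg1 : Measurable fun x => g x y1 := hgmeas.comp (measurable_id.prodMk measurable_const)
  set μ : Measure (X × X) := (ν ⊗ₘ Q).restrict (Set.univ ×ˢ D) with hμdef
  have trans : ∀ F : X × X → ℝ≥0∞, Measurable F →
      ∫⁻ z, F z ∂μ = ∫⁻ x0, ∫⁻ x1 in D, F (x0, x1) ∂(Q x0) ∂ν := by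
    intro F hF
    rw [hμdef,
      show (∫⁻ z, F z ∂((ν ⊗ₘ Q).restrict (Set.univ ×ˢ D)))
        = ∫⁻ z in Set.univ ×ˢ D, F z ∂(ν ⊗ₘ Q) from rfl,
      Measure.setLIntegral_compProd hF MeasurableSet.univ hD, setLIntegral_univ]
  have hm : μ Set.univ = ∫⁻ x, Q x D ∂ν := by
    have h := trans (fun _ => 1) measurable_const
    simpa using h
  -- the functions
  have ha0m : Measurable fun z : X × X => max (-(Real.log (g z.1 y0))) 0 :=
    ((Real.measurable_log.comp mg0).comp measurable_fst).neg.max measurable_const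
  have ha1m : Measurable fun z : X × X => max (-(Real.log (g z.2 y1))) 0 :=
    ((Real.measurable_log.comp mg1).comp measurable_snd).neg.max measurable_const
  have hGm : Measurable fun z : X × X => ENNReal.ofReal (g z.1 y0 * g z.2 y1) :=
    ((mg0.comp measurable_fst).mul (mg1.comp measurable_snd)).ennreal_ofReal
  have hFm : Measurable fun z : X × X =>
      ENNReal.ofReal ((max (-(Real.log (g z.1 y0))) 0) ^ p +
        (max (-(Real.log (g z.2 y1))) 0) ^ p) :=
    ((ha0m.pow_const p).add (ha1m.pow_const p)).ennreal_ofReal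
  have hone : ∀ (x : X) (y : Y), Real.exp (-(max (-(Real.log (g x y))) 0)) ≤ g x y := by
    intro x y
    have h1 : -(max (-(Real.log (g x y))) 0) ≤ Real.log (g x y) := by
      have := le_max_left (-(Real.log (g x y))) 0
      linarith
    calc Real.exp (-(max (-(Real.log (g x y))) 0)) ≤ Real.exp (Real.log (g x y)) :=
        Real.exp_le_exp.2 h1
      _ = g x y := Real.exp_log (hgpos x y)
  have hG : ∀ z : X × X,
      Real.exp (-((max (-(Real.log (g z.1 y0))) 0) + (max (-(Real.log (g z.2 y1))) 0)))
        ≤ g z.1 y0 * g z.2 y1 := by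
    intro z
    rw [neg_add, Real.exp_add]
    exact mul_le_mul (hone z.1 y0) (hone z.2 y1) (Real.exp_pos _).le (hgpos z.1 y0).le
  have hm0 : μ Set.univ ≠ 0 := by rw [hm]; exact hνQD.ne'
  have hm1 : μ Set.univ ≤ 1 := by
    rw [hm]
    calc ∫⁻ x, Q x D ∂ν ≤ ∫⁻ _, 1 ∂ν := lintegral_mono fun x => prob_le_one
      _ = 1 := by simp
  have main := key_jensen μ (fun z => g z.1 y0 * g z.2 y1)
    (fun z => max (-(Real.log (g z.1 y0))) 0) (fun z => max (-(Real.log (g z.2 y1))) 0)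
    ha0m ha1m (fun z => le_max_right _ _) (fun z => le_max_right _ _) hG hm0 hm1 hp
  have hPhi : Phi Q g ν D y0 y1
      = ∫⁻ z, ENNReal.ofReal ((fun z : X × X => g z.1 y0 * g z.2 y1) z) ∂μ := by
    rw [show (∫⁻ z, ENNReal.ofReal ((fun z : X × X => g z.1 y0 * g z.2 y1) z) ∂μ)
        = ∫⁻ z : X × X, ENNReal.ofReal (g z.1 y0 * g z.2 y1) ∂μ from rfl,
      trans _ hGm]
    unfold Phi
    refine lintegral_congr fun x0 => ?_
    rw [← lintegral_const_mul _ mg1.ennreal_ofReal]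
    exact lintegral_congr fun x1 => (ENNReal.ofReal_mul (hgpos x0 y0).le).symm
  rw [show (∫⁻ x, Q x D ∂ν) = μ Set.univ from hm.symm, hPhi,
    show (∫⁻ x0, (∫⁻ x1 in D,
        ENNReal.ofReal ((max (-(Real.log (g x0 y0))) 0) ^ p +
          (max (-(Real.log (g x1 y1))) 0) ^ p) ∂(Q x0)) ∂ν)
      = ∫⁻ z, ENNReal.ofReal
          ((fun z : X × X => max (-(Real.log (g z.1 y0))) 0) z ^ p +
            (fun z : X × X => max (-(Real.log (g z.2 y1))) 0) z ^ p) ∂μ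
      from (trans _ hFm).symm]
  exact main
end

section
/- Let φ ∈ ℝ with |φ| < 1, σ > 0, c > 0, and let Q be the Gaussian autoregressive kernel on ℝ given by Q(x,·) = N(φx, σ²) (the Gaussian measure with mean φx and variance σ²). With V(x) := e^{c|x|}, the function QV(x) := ∫ e^{c|x'|} N(φx,σ²)(dx') is finite for every x, the ratio QV(x)/V(x) is bounded on bounded sets, and lim_{|x|→∞} QV(x)/V(x) = 0. -/
open MeasureTheory ProbabilityTheory Real
open scoped ENNReal NNReal

lemma gauss_exp_lintegral_ne_top (t m σ : ℝ) (hσ : 0 < σ) :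
    (∫⁻ x, ENNReal.ofReal (Real.exp (t * x))
      ∂(gaussianReal m (Real.toNNReal (σ ^ 2)))) ≠ ⊤ := by
  set v : ℝ≥0 := Real.toNNReal (σ ^ 2) with hvdef
  have hv : v ≠ 0 := by
    simp only [hvdef, ← NNReal.coe_ne_zero, Real.coe_toNNReal _ (sq_nonneg σ)]
    positivity
  have hvR : (v : ℝ) = σ ^ 2 := Real.coe_toNNReal _ (sq_nonneg σ)
  have hvpos : (0:ℝ) < v := by rw [hvR]; positivity
  have hb : (0:ℝ) < (2 * (v:ℝ))⁻¹ := by positivity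
  set b : ℝ := (2 * (v:ℝ))⁻¹ with hbdef
  set d : ℝ := m + t * v with hddef
  set C : ℝ := (Real.sqrt (2 * π * v))⁻¹ * Real.exp (t * m + t ^ 2 * v / 2) with hCdef
  have key : ∀ x, gaussianPDFReal m v x * Real.exp (t * x) = C * Real.exp (-b * (x - d) ^ 2) := by
    intro x
    have hv0 : (v:ℝ) ≠ 0 := ne_of_gt hvpos
    have hexp : -(x - m) ^ 2 / (2 * (v:ℝ)) + t * x
        = t * m + t ^ 2 * (v:ℝ) / 2 + -b * (x - d) ^ 2 := by
      rw [hbdef, hddef]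
      field_simp
      ring
    rw [gaussianPDFReal, hCdef, mul_assoc, ← Real.exp_add, hexp, Real.exp_add, ← mul_assoc]
  have hint : Integrable (fun x => gaussianPDFReal m v x * Real.exp (t * x)) := by
    have : Integrable (fun x : ℝ => C * Real.exp (-b * (x - d) ^ 2)) :=
      ((integrable_exp_neg_mul_sq hb).comp_sub_right d).const_mul C
    exact this.congr (Filter.Eventually.of_forall fun x => (key x).symm)
  rw [gaussianReal_of_var_ne_zero m hv,
    lintegral_withDensity_eq_lintegral_mul _ (measurable_gaussianPDF m v)
      (by fun_prop)]
  have hle : ∀ x, (gaussianPDF m v * fun x => ENNReal.ofReal (Real.exp (t * x))) x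
      ≤ ‖gaussianPDFReal m v x * Real.exp (t * x)‖₊ := by
    intro x
    simp only [Pi.mul_apply, gaussianPDF]
    rw [← ENNReal.ofReal_mul (gaussianPDFReal_nonneg m v x)]
    exact Real.ofReal_le_enorm _
  exact ne_of_lt (lt_of_le_of_lt (lintegral_mono hle) hint.2)

lemma gauss_exp_abs_lintegral_ne_top (c m σ : ℝ) (hσ : 0 < σ) :
    (∫⁻ x, ENNReal.ofReal (Real.exp (c * |x|))
      ∂(gaussianReal m (Real.toNNReal (σ ^ 2)))) ≠ ⊤ := by
  have hle : ∀ x : ℝ, ENNReal.ofReal (Real.exp (c * |x|))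
      ≤ ENNReal.ofReal (Real.exp (c * x)) + ENNReal.ofReal (Real.exp (-c * x)) := by
    intro x
    rw [← ENNReal.ofReal_add (Real.exp_nonneg _) (Real.exp_nonneg _)]
    refine ENNReal.ofReal_le_ofReal ?_
    rcases abs_choice x with h | h <;> rw [h]
    · nlinarith [Real.exp_nonneg (-c * x), Real.exp_pos (-c * x)]
    · have : c * -x = -c * x := by ring
      rw [this]
      nlinarith [Real.exp_pos (c * x)]
  refine ne_of_lt (lt_of_le_of_lt (lintegral_mono hle) ?_)
  rw [lintegral_add_left (by fun_prop)]
  exact ENNReal.add_lt_top.mpr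
    ⟨(gauss_exp_lintegral_ne_top c m σ hσ).lt_top,
     (gauss_exp_lintegral_ne_top (-c) m σ hσ).lt_top⟩

lemma gauss_exp_abs_bound (c m σ : ℝ) (hσ : 0 < σ) (hc : 0 ≤ c) :
    (∫⁻ x, ENNReal.ofReal (Real.exp (c * |x|))
      ∂(gaussianReal m (Real.toNNReal (σ ^ 2))))
    ≤ ENNReal.ofReal (Real.exp (c * |m|)) *
      (∫⁻ y, ENNReal.ofReal (Real.exp (c * |y|))
        ∂(gaussianReal 0 (Real.toNNReal (σ ^ 2)))) := by
  have hmap : (gaussianReal 0 (Real.toNNReal (σ ^ 2))).map (· + m)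
      = gaussianReal m (Real.toNNReal (σ ^ 2)) := by
    rw [gaussianReal_map_add_const, zero_add]
  rw [← hmap, lintegral_map (by fun_prop) (measurable_add_const m)]
  calc ∫⁻ y, ENNReal.ofReal (Real.exp (c * |y + m|))
        ∂(gaussianReal 0 (Real.toNNReal (σ ^ 2)))
      ≤ ∫⁻ y, ENNReal.ofReal (Real.exp (c * |m|)) * ENNReal.ofReal (Real.exp (c * |y|))
        ∂(gaussianReal 0 (Real.toNNReal (σ ^ 2))) := by
        refine lintegral_mono fun y => ?_
        rw [← ENNReal.ofReal_mul (Real.exp_nonneg _), ← Real.exp_add]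
        refine ENNReal.ofReal_le_ofReal (Real.exp_le_exp.mpr ?_)
        have : |y + m| ≤ |y| + |m| := abs_add_le y m
        nlinarith
    _ = ENNReal.ofReal (Real.exp (c * |m|)) *
        ∫⁻ y, ENNReal.ofReal (Real.exp (c * |y|))
          ∂(gaussianReal 0 (Real.toNNReal (σ ^ 2))) := lintegral_const_mul _ (by fun_prop)

/-- For the Gaussian autoregressive kernel `Q(x,·) = N(φx, σ²)` with `|φ| < 1`,
`σ > 0`, and `V(x) = e^{c|x|}` with `c > 0`: `QV(x) = ∫ e^{c|x'|} N(φx,σ²)(dx')` is finite for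
every `x`, the ratio `QV(x)/V(x)` is bounded on bounded sets, and `QV(x)/V(x) → 0` as `|x| → ∞`. -/
theorem forgetting_hmm_stmt16 (φ σ c : ℝ) (hφ : |φ| < 1) (hσ : 0 < σ) (hc : 0 < c) :
    (∀ x : ℝ,
      (∫⁻ x', ENNReal.ofReal (Real.exp (c * |x'|))
          ∂(gaussianReal (φ * x) (Real.toNNReal (σ ^ 2)))) ≠ ⊤) ∧
    (∀ r : ℝ, ∃ B : ℝ≥0∞, B ≠ ⊤ ∧ ∀ x : ℝ, |x| ≤ r →
      (∫⁻ x', ENNReal.ofReal (Real.exp (c * |x'|))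
          ∂(gaussianReal (φ * x) (Real.toNNReal (σ ^ 2)))) /
        ENNReal.ofReal (Real.exp (c * |x|)) ≤ B) ∧
    Filter.Tendsto
      (fun x : ℝ =>
        (∫⁻ x', ENNReal.ofReal (Real.exp (c * |x'|))
            ∂(gaussianReal (φ * x) (Real.toNNReal (σ ^ 2)))) /
          ENNReal.ofReal (Real.exp (c * |x|)))
      (Bornology.cobounded ℝ) (nhds 0) := by
  set K := ∫⁻ y, ENNReal.ofReal (Real.exp (c * |y|))
      ∂(gaussianReal 0 (Real.toNNReal (σ ^ 2))) with hKdef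
  have hK : K ≠ ⊤ := gauss_exp_abs_lintegral_ne_top c 0 σ hσ
  have hbound : ∀ x : ℝ,
      (∫⁻ x', ENNReal.ofReal (Real.exp (c * |x'|))
        ∂(gaussianReal (φ * x) (Real.toNNReal (σ ^ 2))))
      ≤ ENNReal.ofReal (Real.exp (c * (|φ| * |x|))) * K := by
    intro x
    have := gauss_exp_abs_bound c (φ * x) σ hσ hc.le
    rwa [abs_mul] at this
  refine ⟨?_, ?_, ?_⟩
  · intro x
    exact ne_top_of_le_ne_top (ENNReal.mul_ne_top ENNReal.ofReal_ne_top hK) (hbound x)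
  · intro r
    refine ⟨ENNReal.ofReal (Real.exp (c * (|φ| * r))) * K,
      ENNReal.mul_ne_top ENNReal.ofReal_ne_top hK, fun x hx => ?_⟩
    refine ENNReal.div_le_of_le_mul ?_
    have h1 : (1 : ℝ≥0∞) ≤ ENNReal.ofReal (Real.exp (c * |x|)) := by
      rw [← ENNReal.ofReal_one]
      exact ENNReal.ofReal_le_ofReal (Real.one_le_exp (by positivity))
    calc (∫⁻ x', ENNReal.ofReal (Real.exp (c * |x'|))
          ∂(gaussianReal (φ * x) (Real.toNNReal (σ ^ 2))))
        ≤ ENNReal.ofReal (Real.exp (c * (|φ| * |x|))) * K := hbound x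
      _ ≤ ENNReal.ofReal (Real.exp (c * (|φ| * r))) * K := by
          refine mul_le_mul' (ENNReal.ofReal_le_ofReal (Real.exp_le_exp.mpr ?_)) le_rfl
          exact mul_le_mul_of_nonneg_left (mul_le_mul_of_nonneg_left hx (abs_nonneg φ)) hc.le
      _ = ENNReal.ofReal (Real.exp (c * (|φ| * r))) * K * 1 := (mul_one _).symm
      _ ≤ ENNReal.ofReal (Real.exp (c * (|φ| * r))) * K *
            ENNReal.ofReal (Real.exp (c * |x|)) := mul_le_mul_right h1 _
  · set a : ℝ := c * (1 - |φ|) with hadef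
    have ha : 0 < a := by
      have := abs_nonneg φ
      nlinarith
    obtain ⟨K', hK'⟩ : ∃ k : ℝ, K = ENNReal.ofReal k :=
      ⟨K.toReal, (ENNReal.ofReal_toReal hK).symm⟩
    have hub : ∀ x : ℝ,
        (∫⁻ x', ENNReal.ofReal (Real.exp (c * |x'|))
          ∂(gaussianReal (φ * x) (Real.toNNReal (σ ^ 2)))) /
          ENNReal.ofReal (Real.exp (c * |x|))
        ≤ ENNReal.ofReal (K' * Real.exp (-(a * |x|))) := by
      intro x
      refine le_trans (ENNReal.div_le_div_right (hbound x) _) (le_of_eq ?_)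
      rw [hK', ← ENNReal.ofReal_mul (Real.exp_nonneg _),
        ← ENNReal.ofReal_div_of_pos (Real.exp_pos _)]
      congr 1
      rw [mul_comm, mul_div_assoc, ← Real.exp_sub]
      congr 1
      rw [hadef]
      ring
    have h1 : Filter.Tendsto (fun x : ℝ => a * |x|) (Bornology.cobounded ℝ) Filter.atTop := by
      have hn : Filter.Tendsto (fun x : ℝ => |x|) (Bornology.cobounded ℝ) Filter.atTop := by
        exact (tendsto_norm_cobounded_atTop (E := ℝ)).congr (fun x => Real.norm_eq_abs x)
      exact hn.const_mul_atTop ha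
    have h2 : Filter.Tendsto (fun x : ℝ => Real.exp (-(a * |x|)))
        (Bornology.cobounded ℝ) (nhds 0) :=
      Real.tendsto_exp_neg_atTop_nhds_zero.comp h1
    have h3 := ENNReal.tendsto_ofReal (h2.const_mul K')
    rw [mul_zero, ENNReal.ofReal_zero] at h3
    exact tendsto_of_tendsto_of_tendsto_of_le_of_le tendsto_const_nhds h3
      (fun x => zero_le) hub
end
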